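/- (Equality (2.10)) Assume F satisfies the quasi-Kähler condition. Fix a basis (e_i) of V, let (g^{ij}) be the inverse of the Gram matrix (g(e_i,e_j)), and define the square norm ‖∇J‖ := Σ g^{ij} g^{ks} g^{pq} F(e_i,e_k,e_p) F(e_j,e_s,e_q). Then ‖∇J‖ = −2 Σ g^{ij} g^{ks} g^{pq} F(e_i,e_k,e_p) F(e_s,e_j,e_q). -/

import Mathlib

private lemma swap4_aux {ι : Type*} [Fintype ι] (f : ι → ι → ι → ι → ℝ) :
    (∑ k, ∑ s, ∑ p, ∑ q, f k s p q) = ∑ k, ∑ s, ∑ p, ∑ q, f p q k s := by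
  have h1 : (∑ k, ∑ s, ∑ p, ∑ q, f k s p q)
      = ∑ a : (ι × ι) × (ι × ι), f a.1.1 a.1.2 a.2.1 a.2.2 := by
    simp [Fintype.sum_prod_type]
  have h2 : (∑ k, ∑ s, ∑ p, ∑ q, f p q k s)
      = ∑ a : (ι × ι) × (ι × ι), f a.2.1 a.2.2 a.1.1 a.1.2 := by
    simp [Fintype.sum_prod_type]
  rw [h1, h2]
  exact Fintype.sum_equiv (Equiv.prodComm _ _) _ _ (fun a => rfl)

/-- Equality (2.10): on a quasi-Kähler manifold with Norden metric the square
norm of `∇J` satisfies `‖∇J‖ = −2 g^{ij} g^{ks} g((∇_{e_i}J)e_k, (∇_{e_s}J)e_j)`. -/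
theorem square_norm_nablaJ_quasiKaehler
    {V : Type*} [AddCommGroup V] [Module ℝ V] [FiniteDimensional ℝ V]
    (g : LinearMap.BilinForm ℝ V)
    (hg_symm : ∀ x y : V, g x y = g y x)
    (hg_nd : ∀ x : V, (∀ y : V, g x y = 0) → x = 0)
    (J : V →ₗ[ℝ] V)
    (hJ : ∀ x : V, J (J x) = -x)
    (hNorden : ∀ x y : V, g (J x) (J y) = -g x y)
    (F : V →ₗ[ℝ] V →ₗ[ℝ] V →ₗ[ℝ] ℝ)
    (hF1 : ∀ x y z : V, F x y z = F x z y)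
    (hF2 : ∀ x y z : V, F x y z = F x (J y) (J z))
    (hQK : ∀ x y z : V, F x y z + F y z x + F z x y = 0)
    {ι : Type*} [Fintype ι] [DecidableEq ι]
    (b : Module.Basis ι ℝ V)
    (Ginv : Matrix ι ι ℝ)
    (hGinv : (Matrix.of fun i j => g (b i) (b j)) * Ginv = 1) :
    (∑ i, ∑ j, ∑ k, ∑ s, ∑ p, ∑ q,
      Ginv i j * Ginv k s * Ginv p q *
        F (b i) (b k) (b p) * F (b j) (b s) (b q)) =
    -2 * (∑ i, ∑ j, ∑ k, ∑ s, ∑ p, ∑ q,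
      Ginv i j * Ginv k s * Ginv p q *
        F (b i) (b k) (b p) * F (b s) (b j) (b q)) := by
  have hsum : ∀ i j : ι,
      (∑ k, ∑ s, ∑ p, ∑ q, Ginv i j * Ginv k s * Ginv p q *
        F (b i) (b k) (b p) * F (b j) (b s) (b q))
      = -2 * ∑ k, ∑ s, ∑ p, ∑ q, Ginv i j * Ginv k s * Ginv p q *
        F (b i) (b k) (b p) * F (b s) (b j) (b q) := by
    intro i j
    have e1 : (∑ k, ∑ s, ∑ p, ∑ q, Ginv i j * Ginv k s * Ginv p q *
          F (b i) (b k) (b p) * F (b j) (b s) (b q))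
        = (∑ k, ∑ s, ∑ p, ∑ q, Ginv i j * Ginv k s * Ginv p q *
          F (b i) (b k) (b p) * (-(F (b s) (b j) (b q)) - F (b q) (b j) (b s))) := by
      refine Finset.sum_congr rfl fun k _ => Finset.sum_congr rfl fun s _ =>
        Finset.sum_congr rfl fun p _ => Finset.sum_congr rfl fun q _ => ?_
      have hc := hQK (b j) (b s) (b q)
      have h1 : F (b s) (b q) (b j) = F (b s) (b j) (b q) := hF1 _ _ _
      have h2 : F (b q) (b j) (b s) = F (b q) (b j) (b s) := rfl
      have : F (b j) (b s) (b q) = -(F (b s) (b j) (b q)) - F (b q) (b j) (b s) := by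
        rw [← h1]; linarith
      rw [this]
    have e2 : (∑ k, ∑ s, ∑ p, ∑ q, Ginv i j * Ginv k s * Ginv p q *
          F (b i) (b k) (b p) * F (b q) (b j) (b s))
        = (∑ k, ∑ s, ∑ p, ∑ q, Ginv i j * Ginv k s * Ginv p q *
          F (b i) (b k) (b p) * F (b s) (b j) (b q)) := by
      rw [swap4_aux (fun k s p q => Ginv i j * Ginv k s * Ginv p q *
          F (b i) (b k) (b p) * F (b q) (b j) (b s))]
      refine Finset.sum_congr rfl fun k _ => Finset.sum_congr rfl fun s _ =>
        Finset.sum_congr rfl fun p _ => Finset.sum_congr rfl fun q _ => ?_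
      have h1 : F (b i) (b p) (b k) = F (b i) (b k) (b p) := (hF1 _ _ _).symm
      rw [h1]; ring
    rw [e1]
    simp only [mul_sub, mul_neg, Finset.sum_sub_distrib, Finset.sum_neg_distrib]
    rw [e2]
    ring
  calc (∑ i, ∑ j, ∑ k, ∑ s, ∑ p, ∑ q, Ginv i j * Ginv k s * Ginv p q *
        F (b i) (b k) (b p) * F (b j) (b s) (b q))
      = ∑ i, ∑ j, -2 * ∑ k, ∑ s, ∑ p, ∑ q, Ginv i j * Ginv k s * Ginv p q *
        F (b i) (b k) (b p) * F (b s) (b j) (b q) :=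
        Finset.sum_congr rfl fun i _ => Finset.sum_congr rfl fun j _ => hsum i j
    _ = _ := by simp [Finset.mul_sum]
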